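/- In ℝ², for a fixed unit vector θ₂, ∫_S |θ₁ - θ₂| θ₁ dθ₁ = -(8/3) θ₂, and consequently ∫_S ∫_S |θ₁-θ₂| θ₁ (θ₂·w) dθ₁ dθ₂ = -(8/3) ∫_S θ₂ (θ₂·w) dθ₂ = -(8π/3) w for any w ∈ ℝ². -/

import Mathlib

open MeasureTheory Metric Real
open scoped RealInnerProductSpace

open Set intervalIntegral

noncomputable section
local notation "E2" => EuclideanSpace ℝ (Fin 2)

def cE (s : ℝ) : E2 := WithLp.toLp 2 ![Real.cos s, Real.sin s]

lemma cE_norm (s : ℝ) : ‖cE s‖ = 1 := by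
  rw [EuclideanSpace.norm_eq]
  simp [cE, Fin.sum_univ_two]

lemma cE_mem (s : ℝ) : cE s ∈ sphere (0 : E2) 1 := by
  simpa using cE_norm s

lemma cE_cont : Continuous cE := by
  apply (PiLp.continuous_toLp ..).comp; apply continuous_pi; intro i; fin_cases i
  exacts [Real.continuous_cos, Real.continuous_sin]

def Φ (r : ℝ) : ℝ := if r < 1 then 1 else 0

lemma half_integral : ∫ r in Set.Ioi (0:ℝ), r * Φ r = 1/2 := by
  have h1 : ∀ r ∈ Set.Ioi (0:ℝ), r * Φ r = (Set.Iio (1:ℝ)).indicator id r := by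
    intro r _
    by_cases h : r < 1 <;> simp [Φ, h, Set.indicator, id]
  rw [setIntegral_congr_fun measurableSet_Ioi h1, MeasureTheory.integral_indicator measurableSet_Iio,
    Measure.restrict_restrict measurableSet_Iio]
  have : Set.Iio (1:ℝ) ∩ Set.Ioi 0 = Set.Ioo (0:ℝ) 1 := by ext x; simp [and_comm]
  rw [this, ← integral_Ioc_eq_integral_Ioo,
    ← intervalIntegral.integral_of_le (by norm_num : (0:ℝ) ≤ 1)]
  simp [integral_id]

lemma phi_volumeIoiPow : ∫ r : Set.Ioi (0:ℝ), Φ r.1 ∂(Measure.volumeIoiPow 1) = 1/2 := by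
  simp only [Measure.volumeIoiPow, ENNReal.ofReal]
  rw [integral_withDensity_eq_integral_smul
      (by exact (measurable_subtype_coe.pow_const _).real_toNNReal),
    integral_subtype_comap measurableSet_Ioi (fun a : ℝ => Real.toNNReal (a ^ 1) • Φ a)]
  rw [← half_integral]
  refine setIntegral_congr_fun measurableSet_Ioi fun x hx => ?_
  rw [NNReal.smul_def, Real.coe_toNNReal _ (pow_nonneg (le_of_lt hx) _)]
  simp

def ψ2 : E2 ≃ᵐ ℝ × ℝ :=
  (MeasurableEquiv.toLp 2 (Fin 2 → ℝ)).symm.trans (MeasurableEquiv.finTwoArrow)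

lemma ψ2_mp : MeasurePreserving (⇑ψ2) volume volume := by
  rw [ψ2, MeasurableEquiv.coe_trans]
  exact (volume_preserving_finTwoArrow ℝ).comp
    (EuclideanSpace.volume_preserving_symm_measurableEquiv_toLp (Fin 2))

section Key
variable {F : Type*} [NormedAddCommGroup F] [NormedSpace ℝ F] [CompleteSpace F]

theorem toSphere_integral_eq (g : sphere (0 : E2) 1 → F) :
    ∫ θ, g θ ∂((volume : Measure E2).toSphere)
      = ∫ s in Set.Ioo (-π) π, g ⟨cE s, cE_mem s⟩ := by
  classical
  set gE : E2 → F := fun x => if hx : x = 0 then 0 else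
    g ⟨‖x‖⁻¹ • x, by
      rw [mem_sphere_zero_iff_norm, norm_smul, norm_inv, norm_norm,
        inv_mul_cancel₀ (norm_ne_zero_iff.2 hx)]⟩ with hgE
  set H : E2 → F := fun x => Φ ‖x‖ • gE x with hH
  have hdim : Module.finrank ℝ E2 = 2 := finrank_euclideanSpace_fin
  -- Step 1: ∫ H = (1/2) • ∫ g dtoSphere
  have step1 : ∫ x, H x = (1/2 : ℝ) • ∫ θ, g θ ∂((volume : Measure E2).toSphere) := by
    have mp := (volume : Measure E2).measurePreserving_homeomorphUnitSphereProd
    have key := mp.integral_comp (Homeomorph.measurableEmbedding _)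
      (fun z : sphere (0:E2) 1 × Ioi (0:ℝ) => Φ z.2.1 • g z.1)
    have lhs : ∫ x : ({0}ᶜ : Set E2),
        (fun z : sphere (0:E2) 1 × Ioi (0:ℝ) => Φ z.2.1 • g z.1)
          (homeomorphUnitSphereProd E2 x) ∂((volume : Measure E2).comap Subtype.val)
        = ∫ x, H x := by
      have : ∀ x : ({0}ᶜ : Set E2),
          (fun z : sphere (0:E2) 1 × Ioi (0:ℝ) => Φ z.2.1 • g z.1)
            (homeomorphUnitSphereProd E2 x) = H x.1 := by
        rintro ⟨x, hx⟩
        have hx' : x ≠ 0 := hx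
        simp only [homeomorphUnitSphereProd, homeomorphSphereProd, Homeomorph.homeomorph_mk_coe, Equiv.coe_fn_mk,
          hH, hgE, dif_neg hx', one_smul, div_one]
      rw [integral_congr_ae (Filter.Eventually.of_forall this),
        integral_subtype_comap (measurableSet_singleton (0:E2)).compl,
        MeasureTheory.restrict_compl_singleton]
    have rhs : ∫ z : sphere (0:E2) 1 × Ioi (0:ℝ), Φ z.2.1 • g z.1
          ∂(((volume : Measure E2).toSphere).prod
              (.volumeIoiPow (Module.finrank ℝ E2 - 1)))
        = (1/2 : ℝ) • ∫ θ, g θ ∂((volume : Measure E2).toSphere) := by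
      rw [← MeasureTheory.integral_prod_swap]
      simp only [Prod.swap]
      have : ∫ z : Ioi (0:ℝ) × sphere (0 : E2) 1, Φ z.1.1 • g z.2
            ∂((Measure.volumeIoiPow (Module.finrank ℝ E2 - 1)).prod
                ((volume : Measure E2).toSphere))
          = (∫ r : Ioi (0:ℝ), Φ r.1 ∂(Measure.volumeIoiPow (Module.finrank ℝ E2 - 1))) •
              ∫ θ, g θ ∂((volume : Measure E2).toSphere) :=
        MeasureTheory.integral_prod_smul (𝕜 := ℝ) (fun r : Ioi (0:ℝ) => Φ r.1) g
      rw [this]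
      congr 1
      rw [hdim]
      exact phi_volumeIoiPow
    rw [← lhs, key, rhs]
  -- Step 2: ∫ H = (1/2) • ∫_{Ioo} g (cE s)
  have step2 : ∫ x, H x = (1/2 : ℝ) • ∫ s in Set.Ioo (-π) π, g ⟨cE s, cE_mem s⟩ := by
    have h1 : ∫ p : ℝ × ℝ, H (ψ2.symm p) = ∫ x, H x :=
      (ψ2_mp.symm ψ2).integral_comp ψ2.symm.measurableEmbedding H
    rw [← h1, ← integral_comp_polarCoord_symm (fun p => H (ψ2.symm p))]
    have h2 : ∀ p ∈ polarCoord.target,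
        p.1 • H (ψ2.symm (polarCoord.symm p))
          = (p.1 * Φ p.1) • g ⟨cE p.2, cE_mem p.2⟩ := by
      rintro ⟨r, θ⟩ hp
      have hr : 0 < r := hp.1
      have hx : ψ2.symm (polarCoord.symm (r, θ)) = r • cE θ := by
        ext i; fin_cases i <;> rfl
      have hnorm : ‖r • cE θ‖ = r := by
        rw [norm_smul, cE_norm, Real.norm_eq_abs, abs_of_pos hr, mul_one]
      have hne : r • cE θ ≠ 0 := by
        intro h; rw [h] at hnorm; simp at hnorm; exact hr.ne' hnorm.symm
      rw [hx, hH, hgE]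
      simp only [dif_neg hne, hnorm]
      rw [smul_smul]
      congr 1
      exact congrArg g (Subtype.ext (by
        show r⁻¹ • (r • cE θ) = cE θ
        rw [smul_smul, inv_mul_cancel₀ hr.ne', one_smul]))
    rw [setIntegral_congr_fun polarCoord.open_target.measurableSet h2]
    show (∫ x : ℝ × ℝ in Ioi (0:ℝ) ×ˢ Ioo (-π) π, (x.1 * Φ x.1) • g ⟨cE x.2, cE_mem x.2⟩) = _
    rw [Measure.volume_eq_prod, ← Measure.prod_restrict,
      MeasureTheory.integral_prod_smul (𝕜 := ℝ) (fun r : ℝ => r * Φ r)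
      (fun θ : ℝ => g ⟨cE θ, cE_mem θ⟩), half_integral]
  have := step1.symm.trans step2
  exact smul_right_injective F (by norm_num : (1/2 : ℝ) ≠ 0) this
end Key

section Trig

def fW (t : ℝ) : ℝ := Real.sqrt (2 - 2 * Real.cos t)

lemma fW_cont : Continuous fW := by
  unfold fW; fun_prop

lemma fW_per : Function.Periodic fW (2 * π) := by
  intro t; unfold fW; rw [Real.cos_add_two_pi]

lemma fW_even (t : ℝ) : fW (-t) = fW t := by
  unfold fW; rw [Real.cos_neg]

lemma fW_eq {t : ℝ} (h0 : 0 ≤ t) (hπ : t ≤ π) : fW t = 2 * Real.sin (t / 2) := by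
  have h : 2 - 2 * Real.cos t = (2 * Real.sin (t / 2)) ^ 2 := by
    have := Real.cos_two_mul (t / 2)
    have h2 : 2 * (t / 2) = t := by ring
    rw [h2] at this
    have := Real.sin_sq_add_cos_sq (t / 2)
    nlinarith
  have hs : 0 ≤ 2 * Real.sin (t / 2) := by
    have : 0 ≤ Real.sin (t / 2) :=
      Real.sin_nonneg_of_nonneg_of_le_pi (by linarith) (by linarith [Real.pi_pos])
    linarith
  rw [fW, h, Real.sqrt_sq hs]

lemma int_sin_c (c : ℝ) (hc : c ≠ 0) (b : ℝ) :
    ∫ t in (0:ℝ)..b, Real.sin (c * t) = c⁻¹ * (1 - Real.cos (c * b)) := by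
  rw [intervalIntegral.integral_comp_mul_left Real.sin hc, mul_zero, integral_sin, Real.cos_zero,
    smul_eq_mul]

lemma int0pi_cos : ∫ t in (0:ℝ)..π, fW t * Real.cos t = -(4/3) := by
  have h1 : ∀ t ∈ Set.uIcc (0:ℝ) π, fW t * Real.cos t
      = Real.sin (3/2 * t) - Real.sin (1/2 * t) := by
    intro t ht
    rw [Set.uIcc_of_le Real.pi_pos.le] at ht
    rw [fW_eq ht.1 ht.2]
    have e1 : (3/2 : ℝ) * t = t / 2 + t := by ring
    have e2 : (1/2 : ℝ) * t = t / 2 := by ring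
    rw [e1, e2, Real.sin_add]
    have hsin := Real.sin_two_mul (t / 2)
    have hcos := Real.cos_two_mul (t / 2)
    have h2 : 2 * (t / 2) = t := by ring
    rw [h2] at hsin hcos
    rw [hsin, hcos]; ring
  rw [intervalIntegral.integral_congr h1, intervalIntegral.integral_sub
      (by apply Continuous.intervalIntegrable; fun_prop)
      (by apply Continuous.intervalIntegrable; fun_prop),
    int_sin_c (3/2) (by norm_num) π, int_sin_c (1/2) (by norm_num) π]
  have h32 : (3/2 : ℝ) * π = π + π/2 := by ring
  have h12 : (1/2 : ℝ) * π = π/2 := by ring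
  rw [h32, h12, Real.cos_add, Real.cos_pi_div_two, Real.sin_pi_div_two, Real.cos_pi, Real.sin_pi]
  norm_num

lemma intpipi_cos : ∫ t in (-π)..π, fW t * Real.cos t = -(8/3) := by
  have hint : ∀ a b : ℝ, IntervalIntegrable (fun t => fW t * Real.cos t) volume a b := by
    intro a b; apply Continuous.intervalIntegrable; exact fW_cont.mul Real.continuous_cos
  have heven : ∫ t in (-π)..(0:ℝ), fW t * Real.cos t = ∫ t in (0:ℝ)..π, fW t * Real.cos t := by
    have := intervalIntegral.integral_comp_neg (a := (0:ℝ)) (b := π)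
      (fun t => fW t * Real.cos t)
    rw [neg_zero] at this
    rw [← this]
    congr 1; funext t; rw [fW_even, Real.cos_neg]
  rw [← intervalIntegral.integral_add_adjacent_intervals (hint (-π) 0) (hint 0 π), heven,
    int0pi_cos]
  norm_num

lemma intpipi_sin : ∫ t in (-π)..π, fW t * Real.sin t = 0 := by
  have hint : ∀ a b : ℝ, IntervalIntegrable (fun t => fW t * Real.sin t) volume a b := by
    intro a b; apply Continuous.intervalIntegrable; exact fW_cont.mul Real.continuous_sin
  have hodd : ∫ t in (-π)..(0:ℝ), fW t * Real.sin t = - ∫ t in (0:ℝ)..π, fW t * Real.sin t := by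
    have := intervalIntegral.integral_comp_neg (a := (0:ℝ)) (b := π)
      (fun t => fW t * Real.sin t)
    rw [neg_zero] at this
    rw [← this, ← intervalIntegral.integral_neg]
    congr 1; funext t; rw [fW_even, Real.sin_neg]; ring
  rw [← intervalIntegral.integral_add_adjacent_intervals (hint (-π) 0) (hint 0 π), hodd]
  ring

lemma shift_integral (h : ℝ → ℝ) (hper : Function.Periodic h (2 * π)) (α : ℝ) :
    ∫ s in (-π)..π, h (s - α) = ∫ t in (-π)..π, h t := by
  rw [intervalIntegral.integral_comp_sub_right h α]
  have e1 : π - α = (-π - α) + 2 * π := by ring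
  have e2 : π = -π + 2 * π := by ring
  rw [e1]
  rw [hper.intervalIntegral_add_eq (-π - α) (-π), ← e2]

lemma shift_cos (α : ℝ) : ∫ s in (-π)..π, fW (s - α) * Real.cos s
    = ∫ u in (-π)..π, fW u * Real.cos (u + α) := by
  have h := intervalIntegral.integral_comp_sub_right (a := -π) (b := π)
    (fun u => fW u * Real.cos (u + α)) α
  have h' : ∫ s in (-π)..π, fW (s - α) * Real.cos s
      = ∫ x in (-π - α)..(π - α), fW x * Real.cos (x + α) := by
    rw [← h]; apply intervalIntegral.integral_congr; intro s _
    simp only []; rw [sub_add_cancel]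
  rw [h']
  have hper : Function.Periodic (fun u => fW u * Real.cos (u + α)) (2 * π) := by
    intro u; simp only []
    rw [fW_per, add_right_comm, Real.cos_add_two_pi]
  have e1 : π - α = (-π - α) + 2 * π := by ring
  rw [e1, hper.intervalIntegral_add_eq (-π - α) (-π), show -π + 2 * π = π by ring]

lemma shift_sin (α : ℝ) : ∫ s in (-π)..π, fW (s - α) * Real.sin s
    = ∫ u in (-π)..π, fW u * Real.sin (u + α) := by
  have h := intervalIntegral.integral_comp_sub_right (a := -π) (b := π)
    (fun u => fW u * Real.sin (u + α)) α
  have h' : ∫ s in (-π)..π, fW (s - α) * Real.sin s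
      = ∫ x in (-π - α)..(π - α), fW x * Real.sin (x + α) := by
    rw [← h]; apply intervalIntegral.integral_congr; intro s _
    simp only []; rw [sub_add_cancel]
  rw [h']
  have hper : Function.Periodic (fun u => fW u * Real.sin (u + α)) (2 * π) := by
    intro u; simp only []
    rw [fW_per, add_right_comm, Real.sin_add_two_pi]
  have e1 : π - α = (-π - α) + 2 * π := by ring
  rw [e1, hper.intervalIntegral_add_eq (-π - α) (-π), show -π + 2 * π = π by ring]

lemma Icos (α : ℝ) : ∫ s in (-π)..π, fW (s - α) * Real.cos s = -(8/3) * Real.cos α := by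
  rw [shift_cos]
  have h2 : ∀ u ∈ Set.uIcc (-π) π, fW u * Real.cos (u + α)
      = Real.cos α * (fW u * Real.cos u) - Real.sin α * (fW u * Real.sin u) := by
    intro u _; rw [Real.cos_add]; ring
  rw [intervalIntegral.integral_congr h2, intervalIntegral.integral_sub
      (by apply Continuous.intervalIntegrable; exact continuous_const.mul (fW_cont.mul Real.continuous_cos))
      (by apply Continuous.intervalIntegrable; exact continuous_const.mul (fW_cont.mul Real.continuous_sin)),
    intervalIntegral.integral_const_mul, intervalIntegral.integral_const_mul,
    intpipi_cos, intpipi_sin]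
  ring

lemma Isin (α : ℝ) : ∫ s in (-π)..π, fW (s - α) * Real.sin s = -(8/3) * Real.sin α := by
  rw [shift_sin]
  have h2 : ∀ u ∈ Set.uIcc (-π) π, fW u * Real.sin (u + α)
      = Real.cos α * (fW u * Real.sin u) + Real.sin α * (fW u * Real.cos u) := by
    intro u _; rw [Real.sin_add]; ring
  rw [intervalIntegral.integral_congr h2, intervalIntegral.integral_add
      (by apply Continuous.intervalIntegrable; exact continuous_const.mul (fW_cont.mul Real.continuous_sin))
      (by apply Continuous.intervalIntegrable; exact continuous_const.mul (fW_cont.mul Real.continuous_cos)),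
    intervalIntegral.integral_const_mul, intervalIntegral.integral_const_mul,
    intpipi_cos, intpipi_sin]
  ring


def eV0 : E2 := EuclideanSpace.single 0 1
def eV1 : E2 := EuclideanSpace.single 1 1

lemma cE_decomp (s : ℝ) : cE s = Real.cos s • eV0 + Real.sin s • eV1 := by
  ext i; fin_cases i <;>
    simp [cE, eV0, eV1, EuclideanSpace.single_apply]

lemma norm_cE_sub (s α : ℝ) : ‖cE s - cE α‖ = fW (s - α) := by
  rw [EuclideanSpace.norm_eq, fW]
  congr 1
  have h1 : ∀ i, ‖(cE s - cE α) i‖ ^ 2 = ((cE s) i - (cE α) i) ^ 2 := by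
    intro i; rw [Real.norm_eq_abs, sq_abs]; rfl
  rw [Fin.sum_univ_two, h1 0, h1 1]
  show (Real.cos s - Real.cos α) ^ 2 + (Real.sin s - Real.sin α) ^ 2 = _
  rw [Real.cos_sub]
  nlinarith [Real.sin_sq_add_cos_sq s, Real.sin_sq_add_cos_sq α]

lemma vec_integral (f : ℝ → ℝ) (hf : Continuous f) :
    ∫ s in Set.Ioo (-π) π, f s • cE s
      = (∫ s in (-π)..π, f s * Real.cos s) • eV0
        + (∫ s in (-π)..π, f s * Real.sin s) • eV1 := by
  have h1 : ∫ s in (-π)..π, f s • cE s = ∫ s in Set.Ioo (-π) π, f s • cE s := by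
    rw [intervalIntegral.integral_of_le (by linarith [Real.pi_pos] : -π ≤ π),
      integral_Ioc_eq_integral_Ioo]
  rw [← h1]
  have h2 : ∀ s ∈ Set.uIcc (-π) π, f s • cE s
      = (f s * Real.cos s) • eV0 + (f s * Real.sin s) • eV1 := by
    intro s _; rw [cE_decomp, smul_add, smul_smul, smul_smul]
  rw [intervalIntegral.integral_congr h2, intervalIntegral.integral_add
      (by apply Continuous.intervalIntegrable; exact (hf.mul Real.continuous_cos).smul continuous_const)
      (by apply Continuous.intervalIntegrable; exact (hf.mul Real.continuous_sin).smul continuous_const),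
    intervalIntegral.integral_smul_const, intervalIntegral.integral_smul_const]

lemma part1' (α : ℝ) :
    (∫ θ₁ : sphere (0 : E2) 1, ‖(θ₁ : E2) - cE α‖ • (θ₁ : E2)
      ∂((volume : Measure E2).toSphere)) = (-(8/3) : ℝ) • cE α := by
  rw [toSphere_integral_eq (fun θ : sphere (0 : E2) 1 => ‖(θ : E2) - cE α‖ • (θ : E2))]
  have h1 : ∀ s, ‖cE s - cE α‖ • cE s = (fun u => fW (u - α)) s • cE s := by
    intro s; rw [norm_cE_sub]
  simp only [h1]
  rw [vec_integral (fun u => fW (u - α))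
      (fW_cont.comp (continuous_id.sub continuous_const))]
  rw [Icos α, Isin α, cE_decomp α, smul_add, smul_smul, smul_smul]

lemma inner_cE (s : ℝ) (w : E2) :
    (inner ℝ (cE s) w : ℝ) = Real.cos s * w 0 + Real.sin s * w 1 := by
  simp [PiLp.inner_apply, RCLike.inner_apply, Fin.sum_univ_two]
  change w 0 * Real.cos s + w 1 * Real.sin s = _; ring

lemma inner_cE_cont (w : E2) : Continuous fun s => (inner ℝ (cE s) w : ℝ) := by
  simp only [inner_cE]
  fun_prop

lemma part2' (w : E2) :
    ∫ s in Set.Ioo (-π) π, (inner ℝ (cE s) w : ℝ) • cE s = (π : ℝ) • w := by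
  rw [vec_integral _ (inner_cE_cont w)]
  have hc : ∫ s in (-π)..π, (inner ℝ (cE s) w : ℝ) * Real.cos s = π * w 0 := by
    have h : ∀ s ∈ Set.uIcc (-π) π, (inner ℝ (cE s) w : ℝ) * Real.cos s
        = w 0 * Real.cos s ^ 2 + w 1 * (Real.sin s * Real.cos s) := by
      intro s _; rw [inner_cE]; ring
    rw [intervalIntegral.integral_congr h, intervalIntegral.integral_add
        (by apply Continuous.intervalIntegrable; fun_prop)
        (by apply Continuous.intervalIntegrable; fun_prop),
      intervalIntegral.integral_const_mul, intervalIntegral.integral_const_mul,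
      integral_cos_sq, integral_sin_mul_cos₁]
    simp
    ring
  have hs : ∫ s in (-π)..π, (inner ℝ (cE s) w : ℝ) * Real.sin s = π * w 1 := by
    have h : ∀ s ∈ Set.uIcc (-π) π, (inner ℝ (cE s) w : ℝ) * Real.sin s
        = w 0 * (Real.sin s * Real.cos s) + w 1 * Real.sin s ^ 2 := by
      intro s _; rw [inner_cE]; ring
    rw [intervalIntegral.integral_congr h, intervalIntegral.integral_add
        (by apply Continuous.intervalIntegrable; fun_prop)
        (by apply Continuous.intervalIntegrable; fun_prop),
      intervalIntegral.integral_const_mul, intervalIntegral.integral_const_mul,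
      integral_sin_sq, integral_sin_mul_cos₁]
    simp
    ring
  rw [hc, hs]
  ext i; fin_cases i <;>
    simp [eV0, eV1, EuclideanSpace.single_apply] <;> ring

lemma exists_angle (θ : sphere (0 : E2) 1) : ∃ α, (θ : E2) = cE α := by
  have hn : ‖(θ : E2)‖ = 1 := mem_sphere_zero_iff_norm.mp θ.2
  set x := (θ : E2) 0 with hx
  set y := (θ : E2) 1 with hy
  have hxy : x ^ 2 + y ^ 2 = 1 := by
    rw [EuclideanSpace.norm_eq, Fin.sum_univ_two] at hn
    have h1 : ‖(θ : E2) 0‖ ^ 2 = x ^ 2 := by rw [Real.norm_eq_abs, sq_abs]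
    have h2 : ‖(θ : E2) 1‖ ^ 2 = y ^ 2 := by rw [Real.norm_eq_abs, sq_abs]
    rw [h1, h2] at hn
    nlinarith [Real.sq_sqrt (by positivity : (0:ℝ) ≤ x ^ 2 + y ^ 2), hn]
  have hx1 : -1 ≤ x := by nlinarith
  have hx2 : x ≤ 1 := by nlinarith
  refine ⟨if 0 ≤ y then Real.arccos x else -Real.arccos x, ?_⟩
  ext i; fin_cases i
  · show x = _
    by_cases h : 0 ≤ y <;>
      simp [cE, h, Real.cos_arccos hx1 hx2, Real.cos_neg]
  · show y = _
    have h12 : Real.sin (Real.arccos x) = |y| := by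
      rw [Real.sin_arccos, show 1 - x ^ 2 = y ^ 2 by nlinarith, Real.sqrt_sq_eq_abs]
    by_cases h : 0 ≤ y
    · simp only [if_pos h, cE]
      show y = Real.sin (Real.arccos x)
      rw [h12, abs_of_nonneg h]
    · simp only [if_neg h, cE]
      show y = Real.sin (-(Real.arccos x))
      rw [Real.sin_neg, h12, abs_of_neg (lt_of_not_ge h)]
      ring

open scoped RealInnerProductSpace


/-- In `ℝ²`, for a fixed unit vector `θ₂`,
`∫_S |θ₁ - θ₂| θ₁ dθ₁ = -(8/3) θ₂`, and consequently for any `w ∈ ℝ²`,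
`∫_S ∫_S |θ₁-θ₂| (θ₂·w) θ₁ dθ₁ dθ₂ = -(8π/3) w`. -/
theorem collision_integral_unitCircle (w : EuclideanSpace ℝ (Fin 2)) :
    (∀ θ₂ : sphere (0 : EuclideanSpace ℝ (Fin 2)) 1,
      (∫ θ₁ : sphere (0 : EuclideanSpace ℝ (Fin 2)) 1,
        ‖(θ₁ : EuclideanSpace ℝ (Fin 2)) - (θ₂ : EuclideanSpace ℝ (Fin 2))‖ •
          (θ₁ : EuclideanSpace ℝ (Fin 2)) ∂(volume.toSphere))
        = (-(8 / 3) : ℝ) • (θ₂ : EuclideanSpace ℝ (Fin 2))) ∧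
    (∫ θ₂ : sphere (0 : EuclideanSpace ℝ (Fin 2)) 1,
      (∫ θ₁ : sphere (0 : EuclideanSpace ℝ (Fin 2)) 1,
        (‖(θ₁ : EuclideanSpace ℝ (Fin 2)) - (θ₂ : EuclideanSpace ℝ (Fin 2))‖ *
          ⟪(θ₂ : EuclideanSpace ℝ (Fin 2)), w⟫) • (θ₁ : EuclideanSpace ℝ (Fin 2))
        ∂(volume.toSphere)) ∂(volume.toSphere))
      = (-(8 * π / 3) : ℝ) • w := by
  have part1 : ∀ θ₂ : sphere (0 : E2) 1,
      (∫ θ₁ : sphere (0 : E2) 1, ‖(θ₁ : E2) - (θ₂ : E2)‖ • (θ₁ : E2)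
        ∂((volume : Measure E2).toSphere)) = (-(8 / 3) : ℝ) • (θ₂ : E2) := by
    intro θ₂
    obtain ⟨α, hα⟩ := exists_angle θ₂
    rw [hα]
    exact part1' α
  refine ⟨part1, ?_⟩
  have inner_eq : ∀ θ₂ : sphere (0 : E2) 1,
      (∫ θ₁ : sphere (0 : E2) 1, (‖(θ₁ : E2) - (θ₂ : E2)‖ * ⟪(θ₂ : E2), w⟫) • (θ₁ : E2)
          ∂((volume : Measure E2).toSphere))
        = (-(8 / 3) : ℝ) • ((⟪(θ₂ : E2), w⟫ : ℝ) • (θ₂ : E2)) := by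
    intro θ₂
    have h1 : ∀ θ₁ : sphere (0 : E2) 1,
        (‖(θ₁ : E2) - (θ₂ : E2)‖ * ⟪(θ₂ : E2), w⟫) • (θ₁ : E2)
          = (⟪(θ₂ : E2), w⟫ : ℝ) • (‖(θ₁ : E2) - (θ₂ : E2)‖ • (θ₁ : E2)) := by
      intro θ₁; rw [smul_smul, mul_comm]
    simp only [h1]
    rw [MeasureTheory.integral_smul, part1 θ₂, smul_comm]
  simp only [inner_eq]
  rw [MeasureTheory.integral_smul,
    toSphere_integral_eq (fun θ : sphere (0 : E2) 1 => (⟪(θ : E2), w⟫ : ℝ) • (θ : E2))]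
  have : ∫ s in Set.Ioo (-π) π, (⟪cE s, w⟫ : ℝ) • cE s = (π : ℝ) • w := part2' w
  rw [this, smul_smul]
  congr 1
  ring
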